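/- Let u ⊆ {1,…,s} be nonempty, k ∈ {0,1,…,m−1}^{|u|}, and let w ⊆ u be nonempty. If rank(C_{u,k+1_w}) − rank(C_{u,k}) < |w| over F₂, then there exists a nonempty v ⊆ w such that ∏_{j∈v} N_{0,i,j} = 1 for every i ∈ {0,…,2^m−1} with C_{u,k}·i⃗ = 0. -/

import Mathlib

open Finset

noncomputable section

/-- The bit vector `i⃗ ∈ F₂^m` of the integer `i = Σ_{ℓ=1}^m i_ℓ 2^{ℓ-1}`. -/
def bvec (m : ℕ) (i : ℕ) : Fin m → ZMod 2 :=
  fun ℓ => if Nat.testBit i ℓ.1 then 1 else 0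

/-- The `(r+1)`-st row (i.e. `r` with 0-indexing) of an `m × m` matrix over `F₂`,
as a vector in `F₂^m`; junk value `0` if `r ≥ m` (never used under the hypotheses below). -/
def rowAt (m : ℕ) (A : Matrix (Fin m) (Fin m) (ZMod 2)) (r : ℕ) : Fin m → ZMod 2 :=
  fun ℓ => if h : r < m then A ⟨r, h⟩ ℓ else 0

/-- The stacked matrix `C_{u,k}`: for each `j ∈ u`, the first `k j` rows of `C j`. -/
def stack {m s : ℕ} (C : Fin s → Matrix (Fin m) (Fin m) (ZMod 2))
    (u : Finset (Fin s)) (k : Fin s → ℕ) :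
    Matrix ((j : {x // x ∈ u}) × Fin (k j.1)) (Fin m) (ZMod 2) :=
  fun p => rowAt m (C p.1.1) p.2.1

/-- `∇C_{u,k}`: the matrix whose rows are the `(k j + 1)`-st rows (1-indexed) of `C j`, `j ∈ u`. -/
def grad {m s : ℕ} (C : Fin s → Matrix (Fin m) (Fin m) (ZMod 2))
    (u : Finset (Fin s)) (k : Fin s → ℕ) :
    Matrix {x // x ∈ u} (Fin m) (ZMod 2) :=
  fun j => rowAt m (C j.1) (k j.1)

/-- The coordinate `x_{ij} ∈ [0,1)` of the digital net generated by `C₁,…,C_s`: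
`x_{ij} = Σ_{ℓ=1}^m y_ℓ 2^{-ℓ}` where `y = C_j · i⃗` over `F₂`. -/
def pt {m s : ℕ} (C : Fin s → Matrix (Fin m) (Fin m) (ZMod 2)) (i : ℕ) (j : Fin s) : ℝ :=
  ∑ ℓ : Fin m, (((C j).mulVec (bvec m i) ℓ).val : ℝ) / 2 ^ (ℓ.1 + 1)

/-- The factor `N`: with `M(x,x') = max{k ∈ ℕ₀ : ⌊2^k x⌋ = ⌊2^k x'⌋}` (the number of matching
leading binary digits), `Nf x x' c` equals `1` if `M(x,x') > c` (equivalently the first `c+1`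
binary digits match), `-1` if `M(x,x') = c` (the first `c` digits match but not `c+1`), and
`0` if `M(x,x') < c`. -/
def Nf (x x' : ℝ) (c : ℕ) : ℤ :=
  if ⌊(2:ℝ) ^ (c + 1) * x⌋ = ⌊(2:ℝ) ^ (c + 1) * x'⌋ then 1
  else if ⌊(2:ℝ) ^ c * x⌋ = ⌊(2:ℝ) ^ c * x'⌋ then -1
  else 0

/-- The gain coefficient `Γ_{u,k} = 2^{-m} Σ_{i=0}^{2^m-1} Σ_{i'=0}^{2^m-1} ∏_{j∈u} N_{i,i',j}`. -/
def Gam {m s : ℕ} (C : Fin s → Matrix (Fin m) (Fin m) (ZMod 2))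
    (u : Finset (Fin s)) (k : Fin s → ℕ) : ℚ :=
  (2 ^ m : ℚ)⁻¹ * ∑ i ∈ Finset.range (2 ^ m), ∑ i' ∈ Finset.range (2 ^ m),
      ∏ j ∈ u, (Nf (pt C i j) (pt C i' j) (k j) : ℚ)

/- ### Auxiliary lemmas -/

open Matrix in
lemma zmod_two_eq_one : ∀ a : ZMod 2, a ≠ 0 → a = 1 := by decide

lemma geom_half (n : ℕ) : ∑ t ∈ Finset.range n, ((1:ℝ)/2)^(t+1) = 1 - (1/2)^n := by
  induction n with
  | zero => simp
  | succ n ih => rw [Finset.sum_range_succ, ih]; ring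

lemma floor_zero_of_bits (m c : ℕ) (y : Fin m → ZMod 2)
    (h : ∀ ℓ : Fin m, ℓ.1 < c → y ℓ = 0) :
    ⌊(2:ℝ)^c * ∑ ℓ : Fin m, ((y ℓ).val : ℝ) / 2 ^ (ℓ.1 + 1)⌋ = 0 := by
  have h0 : 0 ≤ (2:ℝ)^c * ∑ ℓ : Fin m, ((y ℓ).val : ℝ) / 2 ^ (ℓ.1 + 1) := by
    positivity
  have hb : ∀ ℓ : Fin m, (2:ℝ)^c * (((y ℓ).val : ℝ) / 2 ^ (ℓ.1 + 1))
      ≤ (if ℓ.1 < c then 0 else (2:ℝ)^c / 2 ^ (ℓ.1 + 1)) := by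
    intro ℓ
    by_cases hl : ℓ.1 < c
    · simp [hl, h ℓ hl]
    · simp only [hl, if_false]
      have : ((y ℓ).val : ℝ) ≤ 1 := by
        have := ZMod.val_lt (y ℓ)
        exact_mod_cast Nat.lt_succ_iff.mp this
      rw [div_eq_mul_inv, div_eq_mul_inv]
      have hp : (0:ℝ) ≤ (2:ℝ)^c * ((2:ℝ) ^ (ℓ.1+1))⁻¹ := by positivity
      calc (2:ℝ)^c * (((y ℓ).val : ℝ) * ((2:ℝ) ^ (ℓ.1+1))⁻¹)
          ≤ (2:ℝ)^c * (1 * ((2:ℝ) ^ (ℓ.1+1))⁻¹) := by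
            gcongr
        _ = (2:ℝ)^c * ((2:ℝ) ^ (ℓ.1+1))⁻¹ := by ring
  have h1 : (2:ℝ)^c * ∑ ℓ : Fin m, ((y ℓ).val : ℝ) / 2 ^ (ℓ.1 + 1) < 1 := by
    rw [Finset.mul_sum]
    calc ∑ ℓ : Fin m, (2:ℝ)^c * (((y ℓ).val : ℝ) / 2 ^ (ℓ.1 + 1))
        ≤ ∑ ℓ : Fin m, (if ℓ.1 < c then 0 else (2:ℝ)^c / 2 ^ (ℓ.1 + 1)) :=
          Finset.sum_le_sum (fun ℓ _ => hb ℓ)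
      _ = ∑ ℓ ∈ Finset.range m, (if ℓ < c then 0 else (2:ℝ)^c / 2 ^ (ℓ + 1)) := by
          rw [Fin.sum_univ_eq_sum_range (fun ℓ => if ℓ < c then 0 else (2:ℝ)^c / 2 ^ (ℓ + 1))]
      _ = ∑ ℓ ∈ Finset.Ico c m, (2:ℝ)^c / 2 ^ (ℓ + 1) := by
          rw [show (∑ ℓ ∈ Finset.range m, (if ℓ < c then 0 else (2:ℝ)^c / 2 ^ (ℓ + 1)))
              = ∑ ℓ ∈ Finset.range m, (if c ≤ ℓ then (2:ℝ)^c / 2 ^ (ℓ + 1) else 0) from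
            Finset.sum_congr rfl (fun ℓ _ => by
              by_cases hl : ℓ < c
              · rw [if_pos hl, if_neg (by omega)]
              · rw [if_neg hl, if_pos (by omega)]),
            ← Finset.sum_filter]
          congr 1
          ext ℓ
          simp [Finset.mem_Ico, Finset.mem_filter]
          omega
      _ = ∑ t ∈ Finset.range (m - c), (2:ℝ)^c / 2 ^ (c + t + 1) := by
          rw [Finset.sum_Ico_eq_sum_range]
      _ = ∑ t ∈ Finset.range (m - c), ((1:ℝ)/2) ^ (t + 1) := by
          apply Finset.sum_congr rfl
          intro t _
          rw [div_pow, one_pow, pow_add, pow_add]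
          field_simp
          ring
      _ = 1 - (1/2) ^ (m - c) := geom_half _
      _ < 1 := by
          have : (0:ℝ) < (1/2) ^ (m - c) := by positivity
          linarith
  rw [Int.floor_eq_zero_iff]
  exact ⟨h0, h1⟩

lemma floor_bit (m c : ℕ) (hc : c < m) (y : Fin m → ZMod 2)
    (h : ∀ ℓ : Fin m, ℓ.1 < c → y ℓ = 0) :
    ⌊(2:ℝ)^(c+1) * ∑ ℓ : Fin m, ((y ℓ).val : ℝ) / 2 ^ (ℓ.1 + 1)⌋ = (y ⟨c, hc⟩).val := by
  classical
  set c' : Fin m := ⟨c, hc⟩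
  set y' : Fin m → ZMod 2 := Function.update y c' 0 with hy'
  have hsum' : ∑ ℓ : Fin m, ((y' ℓ).val : ℝ) / 2 ^ (ℓ.1 + 1)
      = ∑ ℓ ∈ Finset.univ.erase c', ((y ℓ).val : ℝ) / 2 ^ (ℓ.1 + 1) := by
    rw [← Finset.add_sum_erase _ _ (Finset.mem_univ c')]
    have : ∀ ℓ ∈ Finset.univ.erase c', ((y' ℓ).val : ℝ) / 2 ^ (ℓ.1 + 1)
        = ((y ℓ).val : ℝ) / 2 ^ (ℓ.1 + 1) := by
      intro ℓ hℓ
      rw [hy', Function.update_of_ne (Finset.ne_of_mem_erase hℓ)]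
    rw [Finset.sum_congr rfl this]
    simp [hy']
  have hsum : ∑ ℓ : Fin m, ((y ℓ).val : ℝ) / 2 ^ (ℓ.1 + 1)
      = ((y c').val : ℝ) / 2 ^ (c + 1) + ∑ ℓ : Fin m, ((y' ℓ).val : ℝ) / 2 ^ (ℓ.1 + 1) := by
    rw [hsum', ← Finset.add_sum_erase _ _ (Finset.mem_univ c')]
  have hz : ⌊(2:ℝ)^(c+1) * ∑ ℓ : Fin m, ((y' ℓ).val : ℝ) / 2 ^ (ℓ.1 + 1)⌋ = 0 := by
    apply floor_zero_of_bits
    intro ℓ hℓ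
    rcases Nat.lt_succ_iff_lt_or_eq.mp hℓ with h1 | h1
    · rw [hy', Function.update_of_ne (by simp [c', Fin.ext_iff]; omega), h ℓ h1]
    · have : ℓ = c' := by simp [c', Fin.ext_iff, h1]
      rw [this, hy', Function.update_self]
  rw [hsum, mul_add]
  have : (2:ℝ)^(c+1) * (((y c').val : ℝ) / 2 ^ (c + 1)) = ((y c').val : ℝ) := by
    field_simp
  rw [this, Int.floor_natCast_add, hz, add_zero]

lemma Nf_eval (m c : ℕ) (hc : c < m) (y : Fin m → ZMod 2)
    (h : ∀ ℓ : Fin m, ℓ.1 < c → y ℓ = 0) :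
    Nf 0 (∑ ℓ : Fin m, ((y ℓ).val : ℝ) / 2 ^ (ℓ.1 + 1)) c = (-1)^(y ⟨c,hc⟩).val := by
  unfold Nf
  rw [mul_zero, mul_zero, Int.floor_zero, floor_bit m c hc y h, floor_zero_of_bits m c y h]
  have hv := ZMod.val_lt (y ⟨c,hc⟩)
  rcases (by omega : (y ⟨c,hc⟩).val = 0 ∨ (y ⟨c,hc⟩).val = 1) with h1 | h1 <;>
    rw [h1] <;> norm_num

open Matrix in
lemma sum_dot {n : Type*} [Fintype n] {ι : Type*} (s : Finset ι)
    (f : ι → n → ZMod 2) (b : n → ZMod 2) :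
    (∑ j ∈ s, f j) ⬝ᵥ b = ∑ j ∈ s, f j ⬝ᵥ b := by
  classical
  induction s using Finset.cons_induction with
  | empty => simp [zero_dotProduct]
  | cons j s hj ih => simp only [Finset.sum_cons, add_dotProduct, ih]

lemma pt_zero {m s : ℕ} (C : Fin s → Matrix (Fin m) (Fin m) (ZMod 2)) (j : Fin s) :
    pt C 0 j = 0 := by
  have : bvec m 0 = 0 := by
    funext ℓ; simp [bvec]
  simp [pt, this, Matrix.mulVec_zero]

open Matrix in
theorem statement (m s : ℕ) (hm : 1 ≤ m) (hs : 1 ≤ s)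
    (C : Fin s → Matrix (Fin m) (Fin m) (ZMod 2))
    (u : Finset (Fin s)) (hu : u.Nonempty)
    (k : Fin s → ℕ) (hk : ∀ j ∈ u, k j ≤ m - 1)
    (w : Finset (Fin s)) (hwu : w ⊆ u) (hw : w.Nonempty)
    (hrank : (stack C u (fun j => if j ∈ w then k j + 1 else k j)).rank
      - (stack C u k).rank < w.card) :
    ∃ v : Finset (Fin s), v ⊆ w ∧ v.Nonempty ∧
      ∀ i < 2 ^ m, (stack C u k).mulVec (bvec m i) = 0 →
        ∏ j ∈ v, Nf (pt C 0 j) (pt C i j) (k j) = 1 := by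
  classical
  haveI : Fact (Nat.Prime 2) := ⟨Nat.prime_two⟩
  set g : Fin s → (Fin m → ZMod 2) := fun j => rowAt m (C j) (k j) with hg
  set V1 : Submodule (ZMod 2) (Fin m → ZMod 2) :=
    Submodule.span (ZMod 2) (Set.range (stack C u k)) with hV1
  have key : ∃ v : Finset (Fin s), v ⊆ w ∧ v.Nonempty ∧ (∑ j ∈ v, g j) ∈ V1 := by
    by_contra hcon
    push_neg at hcon
    set gw : {x // x ∈ w} → (Fin m → ZMod 2) := fun j => g j.1 with hgw
    have main : ∀ c : {x // x ∈ w} → ZMod 2, (∑ i, c i • gw i) ∈ V1 → ∀ i, c i = 0 := by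
      intro c hc i
      by_contra hci
      set v : Finset (Fin s) :=
        (Finset.univ.filter (fun i : {x // x ∈ w} => c i ≠ 0)).image Subtype.val with hv
      have hvw : v ⊆ w := by
        intro j hj
        simp only [hv, Finset.mem_image, Finset.mem_filter, Finset.mem_univ, true_and] at hj
        obtain ⟨a, _, rfl⟩ := hj
        exact a.2
      have hvne : v.Nonempty := ⟨i.1, by
        simp only [hv, Finset.mem_image, Finset.mem_filter, Finset.mem_univ, true_and]
        exact ⟨i, hci, rfl⟩⟩
      have hsum : ∑ j ∈ v, g j = ∑ i, c i • gw i := by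
        calc ∑ j ∈ v, g j
            = ∑ x ∈ Finset.univ.filter (fun i : {x // x ∈ w} => c i ≠ 0), g x.1 := by
              rw [hv]
              exact Finset.sum_image (fun a _ b _ hab => Subtype.ext hab)
          _ = ∑ x ∈ Finset.univ.filter (fun i : {x // x ∈ w} => c i ≠ 0), c x • gw x :=
              Finset.sum_congr rfl (fun x hx => by
                rw [zmod_two_eq_one (c x) (Finset.mem_filter.mp hx).2, one_smul])
          _ = ∑ i, c i • gw i :=
              Finset.sum_filter_of_ne (fun x _ hx hc0 => hx (by rw [hc0, zero_smul]))
      exact hcon v hvw hvne (hsum ▸ hc)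
    have hli : LinearIndependent (ZMod 2) gw := by
      rw [Fintype.linearIndependent_iff]
      intro c hc
      exact main c (by rw [hc]; exact V1.zero_mem)
    set G : Submodule (ZMod 2) (Fin m → ZMod 2) :=
      Submodule.span (ZMod 2) (Set.range gw) with hG
    have hdisj : V1 ⊓ G = ⊥ := by
      rw [Submodule.eq_bot_iff]
      intro x hx
      obtain ⟨hx1, hx2⟩ := Submodule.mem_inf.mp hx
      obtain ⟨c, hcx⟩ := (Submodule.mem_span_range_iff_exists_fun (ZMod 2)).mp hx2
      have hc0 := main c (by rw [hcx]; exact hx1)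
      rw [← hcx]
      simp [hc0]
    have hGr : Module.finrank (ZMod 2) G = w.card := by
      rw [hG, finrank_span_eq_card hli, Fintype.card_coe]
    have hrange : Set.range (stack C u (fun j => if j ∈ w then k j + 1 else k j))
        = Set.range (stack C u k) ∪ Set.range gw := by
      ext x
      constructor
      · rintro ⟨⟨⟨j, hj⟩, ⟨r, hr⟩⟩, rfl⟩
        by_cases hrk : r < k j
        · exact Or.inl ⟨⟨⟨j, hj⟩, ⟨r, hrk⟩⟩, rfl⟩
        · have hjw : j ∈ w := by
            by_contra hjw
            simp only [hjw, if_false] at hr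
            omega
          have hrkj : r = k j := by
            simp only [hjw, if_true] at hr
            omega
          exact Or.inr ⟨⟨j, hjw⟩, by simp [stack, hgw, hg, hrkj]⟩
      · rintro (⟨⟨⟨j, hj⟩, ⟨r, hr⟩⟩, rfl⟩ | ⟨⟨j, hjw⟩, rfl⟩)
        · exact ⟨⟨⟨j, hj⟩, ⟨r, by split <;> omega⟩⟩, rfl⟩
        · exact ⟨⟨⟨j, hwu hjw⟩, ⟨k j, by simp [hjw]⟩⟩, rfl⟩
    have hrank2 : (stack C u (fun j => if j ∈ w then k j + 1 else k j)).rank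
        = Module.finrank (ZMod 2) V1 + w.card := by
      rw [Matrix.rank_eq_finrank_span_row, Matrix.row, hrange, Submodule.span_union]
      have hh := Submodule.finrank_sup_add_finrank_inf_eq V1 G
      rw [hdisj] at hh
      simp only [finrank_bot, add_zero] at hh
      rw [← hV1, ← hG, hh, hGr]
    have hrank1 : (stack C u k).rank = Module.finrank (ZMod 2) V1 :=
      Matrix.rank_eq_finrank_span_row _
    rw [hrank2, hrank1] at hrank
    omega
  obtain ⟨v, hvw, hvne, hmem⟩ := key
  refine ⟨v, hvw, hvne, ?_⟩
  intro i hi hzero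
  have hrow : ∀ j, j ∈ u → ∀ r, r < k j → rowAt m (C j) r ⬝ᵥ bvec m i = 0 := by
    intro j hj r hr
    have := congrFun hzero ⟨⟨j, hj⟩, ⟨r, hr⟩⟩
    simpa [Matrix.mulVec, stack] using this
  have hVz : ∀ x ∈ V1, x ⬝ᵥ bvec m i = 0 := by
    intro x hx
    induction hx using Submodule.span_induction with
    | mem x hx =>
        obtain ⟨⟨⟨j, hj⟩, ⟨r, hr⟩⟩, rfl⟩ := hx
        exact hrow j hj r hr
    | zero => simp [zero_dotProduct]
    | add x y _ _ hx hy => rw [add_dotProduct, hx, hy, add_zero]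
    | smul a x _ hx => rw [smul_dotProduct, hx, smul_zero]
  have hsum0 : ∑ j ∈ v, (g j ⬝ᵥ bvec m i) = 0 := by
    rw [← sum_dot]; exact hVz _ hmem
  have hkm : ∀ j ∈ u, k j < m := fun j hj => lt_of_le_of_lt (hk j hj) (by omega)
  have hNf : ∀ j ∈ v, Nf (pt C 0 j) (pt C i j) (k j)
      = (-1)^((g j ⬝ᵥ bvec m i).val) := by
    intro j hj
    have hju : j ∈ u := hwu (hvw hj)
    have hkj : k j < m := hkm j hju
    set y : Fin m → ZMod 2 := (C j).mulVec (bvec m i) with hy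
    have hy0 : ∀ ℓ : Fin m, ℓ.1 < k j → y ℓ = 0 := by
      intro ℓ hℓ
      have hre : rowAt m (C j) ℓ.1 = C j ℓ := by
        funext t
        simp [rowAt, ℓ.2]
      have h0 := hrow j hju ℓ.1 hℓ
      rw [hre] at h0
      simpa [hy, Matrix.mulVec] using h0
    have hgj : y ⟨k j, hkj⟩ = g j ⬝ᵥ bvec m i := by
      have : g j = C j ⟨k j, hkj⟩ := by
        funext t
        simp [hg, rowAt, hkj]
      rw [this, hy]
      rfl
    rw [pt_zero, show pt C i j = ∑ ℓ : Fin m, ((y ℓ).val : ℝ) / 2 ^ (ℓ.1 + 1) from rfl,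
      Nf_eval m (k j) hkj y hy0, hgj]
  have heven : Even (∑ j ∈ v, (g j ⬝ᵥ bvec m i).val) := by
    have hcast : ((∑ j ∈ v, (g j ⬝ᵥ bvec m i).val : ℕ) : ZMod 2) = 0 := by
      push_cast
      have : ∀ j ∈ v, (((g j ⬝ᵥ bvec m i).val : ℕ) : ZMod 2) = g j ⬝ᵥ bvec m i := by
        intro j _
        rw [ZMod.natCast_val, ZMod.cast_id]
      rw [Finset.sum_congr rfl this]
      exact hsum0
    have hdvd : (2:ℕ) ∣ ∑ j ∈ v, (g j ⬝ᵥ bvec m i).val :=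
      (ZMod.natCast_eq_zero_iff _ 2).mp hcast
    obtain ⟨t, ht⟩ := hdvd
    exact ⟨t, by omega⟩
  calc ∏ j ∈ v, Nf (pt C 0 j) (pt C i j) (k j)
      = ∏ j ∈ v, (-1:ℤ)^((g j ⬝ᵥ bvec m i).val) := Finset.prod_congr rfl hNf
    _ = (-1:ℤ)^(∑ j ∈ v, (g j ⬝ᵥ bvec m i).val) :=
        Finset.prod_pow_eq_pow_sum v _ _
    _ = 1 := Even.neg_one_pow heven

end
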